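/- Let k be a field of characteristic different from 2 and 3, and let π(x,y) = (2y(y−x+2)/(x−y)², y²/(x−y)²) for x ≠ y. Let p, q ∈ k with q ≠ 0 and p² = 4q (so p ≠ 0). Then the unique point (x,y) ∈ k² with x ≠ y and π(x,y) = (p,q) is (x,y) = (2q/p + 1, 2q/p); in particular this point lies on the harmonic line x = y + 1. (This is the statement that the double cover π is ramified exactly over the balanced parabola.) -/

import Mathlib

/-- The Pappus–Steiner map `π(x,y) = (2y(y−x+2)/(x−y)², y²/(x−y)²)`. -/
def pap {k : Type*} [Field k] (z : k × k) : k × k :=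
  (2 * z.2 * (z.2 - z.1 + 2) / (z.1 - z.2) ^ 2, z.2 ^ 2 / (z.1 - z.2) ^ 2)

/-- Over the balanced parabola `p² = 4q` (with `q ≠ 0`), the fiber of the double
cover `π` consists of the single point `(2q/p + 1, 2q/p)`, which lies on the
harmonic line `x = y + 1`: the cover is ramified over the balanced parabola. -/
theorem pap_ramified_over_balanced {k : Type*} [Field k]
    (hchar2 : ringChar k ≠ 2) (hchar3 : ringChar k ≠ 3)
    (p q : k) (hq : q ≠ 0) (hpq : p ^ 2 = 4 * q) :
    p ≠ 0 ∧
    (∀ x y : k, x ≠ y →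
      (pap (x, y) = (p, q) ↔ (x, y) = (2 * q / p + 1, 2 * q / p))) := by
  have h2 : (2 : k) ≠ 0 := Ring.two_ne_zero hchar2
  have h4 : (4 : k) ≠ 0 := by
    have h := mul_ne_zero h2 h2
    norm_num at h
    exact h
  have hp : p ≠ 0 := by
    intro h
    apply hq
    have h0 : (4 : k) * q = 0 := by rw [← hpq, h]; ring
    exact (mul_eq_zero.mp h0).resolve_left h4
  refine ⟨hp, fun x y hxy => ?_⟩
  have hd : x - y ≠ 0 := sub_ne_zero.mpr hxy
  constructor
  · intro h
    simp only [pap, Prod.mk.injEq] at h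
    obtain ⟨h1, h2'⟩ := h
    rw [div_eq_iff (pow_ne_zero 2 hd)] at h1 h2'
    have hy0 : y ≠ 0 := by
      intro h0
      apply hq
      have hqz : q * (x - y) ^ 2 = 0 := by rw [← h2', h0]; ring
      exact (mul_eq_zero.mp hqz).resolve_right (pow_ne_zero 2 hd)
    have key : x - y = 1 := by
      have sq : 4 * y ^ 2 * (y - x + 2) ^ 2 = 4 * y ^ 2 * (x - y) ^ 2 := by
        calc 4 * y ^ 2 * (y - x + 2) ^ 2 = (2 * y * (y - x + 2)) ^ 2 := by ring
          _ = (p * (x - y) ^ 2) ^ 2 := by rw [h1]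
          _ = p ^ 2 * (x - y) ^ 4 := by ring
          _ = 4 * q * (x - y) ^ 4 := by rw [hpq]
          _ = 4 * (q * (x - y) ^ 2) * (x - y) ^ 2 := by ring
          _ = 4 * y ^ 2 * (x - y) ^ 2 := by rw [← h2']
      have fac : (4 * y ^ 2) * (4 - 4 * (x - y)) = 0 := by linear_combination sq
      have hy2 : (4 : k) * y ^ 2 ≠ 0 := mul_ne_zero h4 (pow_ne_zero 2 hy0)
      have h14 : (4 : k) * (1 - (x - y)) = 0 := by
        linear_combination (mul_eq_zero.mp fac).resolve_left hy2
      have := (mul_eq_zero.mp h14).resolve_left h4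
      linear_combination -this
    have hyp : 2 * y = p := by
      have hx1 : x = y + 1 := by linear_combination key
      rw [hx1] at h1
      linear_combination h1
    have hq' : y ^ 2 = q := by
      rw [key, one_pow, mul_one] at h2'
      exact h2'
    have hy' : y = 2 * q / p := by
      rw [eq_div_iff hp]
      linear_combination (-y) * hyp + 2 * hq'
    have hx' : x = 2 * q / p + 1 := by rw [← hy']; linear_combination key
    exact Prod.ext_iff.mpr ⟨hx', hy'⟩
  · intro h
    rw [Prod.mk.injEq] at h
    obtain ⟨hx, hy⟩ := h
    have hd1 : x - y = 1 := by rw [hx, hy]; ring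
    simp only [pap, Prod.mk.injEq, hd1, one_pow, div_one]
    constructor
    · rw [hx, hy]
      field_simp
      linear_combination -p * hpq
    · rw [hy]
      field_simp
      linear_combination -hpq
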